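/- For all x > 0, Q > 0, N > 0 with Q ≤ (2√(ln 2)/(4 − √2))·√N, the following inequality holds: (x²(x+2) − 2x·ln(x+1))·Q + (x − (x+1)ln(x+1))·√(x(x+2))·√(x(x+2)Q² + 4N(x+1)²·ln(x+1)·ln 2) < 0. -/

import Mathlib

open Real

/-- Padé lower bound for the logarithm: `2x/(x+2) ≤ log (x+1)` for `x ≥ 0`,
stated in multiplied-out form. -/
lemma pade_log (x : ℝ) (hx : 0 ≤ x) : 2 * x ≤ Real.log (x + 1) * (x + 2) := by
  have key : 2 * x / (x + 2) ≤ Real.log (x + 1) := by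
    set f : ℝ → ℝ := fun t => Real.log (t + 1) - 2 * t / (t + 2) with hf
    have hderiv : ∀ t : ℝ, 0 ≤ t →
        HasDerivAt f (1 / (t + 1) - 4 / (t + 2) ^ 2) t := by
      intro t ht
      have h1 : t + 1 ≠ 0 := by positivity
      have h2 : t + 2 ≠ 0 := by positivity
      have hlog : HasDerivAt (fun s : ℝ => Real.log (s + 1)) (1 / (t + 1)) t := by
        have := (Real.hasDerivAt_log h1).comp t ((hasDerivAt_id t).add_const 1)
        simpa [Function.comp_def, one_div] using this
      have hdiv : HasDerivAt (fun s : ℝ => 2 * s / (s + 2)) (4 / (t + 2) ^ 2) t := by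
        have hnum : HasDerivAt (fun s : ℝ => 2 * s) 2 t := by
          simpa using (hasDerivAt_id t).const_mul (2 : ℝ)
        have hden : HasDerivAt (fun s : ℝ => s + 2) 1 t := (hasDerivAt_id t).add_const 2
        have := hnum.fun_div hden h2
        rw [show (4 : ℝ) / (t + 2) ^ 2 = (2 * (t + 2) - 2 * t * 1) / (t + 2) ^ 2 by ring]
        exact this
      exact hlog.sub hdiv
    have hmono : MonotoneOn f (Set.Ici (0 : ℝ)) := by
      apply monotoneOn_of_deriv_nonneg (convex_Ici 0)
      · intro t ht
        have ht' : (0 : ℝ) ≤ t := ht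
        exact ((hderiv t ht').continuousAt).continuousWithinAt
      · intro t ht
        rw [interior_Ici] at ht
        have ht0 : (0 : ℝ) < t := ht
        exact ((hderiv t ht0.le).differentiableAt).differentiableWithinAt
      · intro t ht
        rw [interior_Ici] at ht
        have ht0 : (0 : ℝ) < t := ht
        rw [(hderiv t ht0.le).deriv]
        have h1 : (0 : ℝ) < t + 1 := by linarith
        have h2 : (0 : ℝ) < t + 2 := by linarith
        rw [sub_nonneg, div_le_div_iff₀ (by positivity) (by positivity)]
        nlinarith [sq_nonneg t]
    have h0 : f 0 = 0 := by simp [hf]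
    have := hmono (Set.self_mem_Ici) (Set.mem_Ici.2 hx) hx
    rw [h0] at this
    have h2 : (0 : ℝ) < x + 2 := by linarith
    simp only [hf] at this
    linarith
  have h2 : (0 : ℝ) < x + 2 := by linarith
  calc 2 * x = 2 * x / (x + 2) * (x + 2) := by field_simp
    _ ≤ Real.log (x + 1) * (x + 2) := by
        exact mul_le_mul_of_nonneg_right key h2.le

theorem core_ineq (x Q N : ℝ) (hx : 0 < x) (hQ : 0 < Q) (hN : 0 < N)
    (h : Q ≤ 2 * Real.sqrt (Real.log 2) / (4 - Real.sqrt 2) * Real.sqrt N) :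
    (x ^ 2 * (x + 2) - 2 * x * Real.log (x + 1)) * Q
      + (x - (x + 1) * Real.log (x + 1)) * Real.sqrt (x * (x + 2)) *
        Real.sqrt (x * (x + 2) * Q ^ 2 + 4 * N * (x + 1) ^ 2 * Real.log (x + 1) * Real.log 2)
      < 0 := by
  set L := Real.log (x + 1) with hLdef
  set l2 := Real.log 2 with hl2def
  have hLpos : 0 < L := Real.log_pos (by linarith)
  have hl2pos : 0 < l2 := Real.log_pos (by norm_num)
  have hLx : L < x := by
    have := Real.log_lt_sub_one_of_pos (x := x + 1) (by linarith)
      (by intro hcon; linarith)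
    rw [← hLdef] at this
    linarith
  have hkey : 2 * x ≤ L * (x + 2) := by
    have := pade_log x hx.le
    rw [← hLdef] at this
    exact this
  -- D := (x+1)L - x is positive
  have hD : x ^ 2 ≤ ((x + 1) * L - x) * (x + 2) := by nlinarith
  have hDpos : 0 < (x + 1) * L - x := by nlinarith
  -- bound on E := 2x(x+2) - L(x²+3x+4)
  have hE : (2 * x * (x + 2) - L * (x ^ 2 + 3 * x + 4)) * (x + 2) ≤ 2 * x ^ 2 := by
    nlinarith
  -- A := x²(x+2) - 2xL > 0
  have hApos : 0 < x ^ 2 * (x + 2) - 2 * x * L := by nlinarith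
  -- bound Q² from hypothesis
  have hs2 : Real.sqrt 2 < 1.5 := by
    rw [show (1.5 : ℝ) = 3 / 2 by norm_num]
    rw [Real.sqrt_lt' (by norm_num)]
    norm_num
  have hc : (0 : ℝ) < 4 - Real.sqrt 2 := by linarith
  have h' : Q * (4 - Real.sqrt 2) ≤ 2 * Real.sqrt l2 * Real.sqrt N := by
    have : Q ≤ 2 * Real.sqrt l2 * Real.sqrt N / (4 - Real.sqrt 2) := by
      rw [hl2def]; linarith [h, (by ring :
        2 * Real.sqrt (Real.log 2) / (4 - Real.sqrt 2) * Real.sqrt N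
          = 2 * Real.sqrt (Real.log 2) * Real.sqrt N / (4 - Real.sqrt 2))]
    calc Q * (4 - Real.sqrt 2)
        ≤ 2 * Real.sqrt l2 * Real.sqrt N / (4 - Real.sqrt 2) * (4 - Real.sqrt 2) :=
          mul_le_mul_of_nonneg_right this hc.le
      _ = 2 * Real.sqrt l2 * Real.sqrt N := by field_simp
  have hsq' : (Q * (4 - Real.sqrt 2)) ^ 2 ≤ 4 * l2 * N := by
    have hr : (2 * Real.sqrt l2 * Real.sqrt N) ^ 2 = 4 * l2 * N := by
      rw [mul_pow, mul_pow, Real.sq_sqrt hl2pos.le, Real.sq_sqrt hN.le]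
      ring
    calc (Q * (4 - Real.sqrt 2)) ^ 2
        ≤ (2 * Real.sqrt l2 * Real.sqrt N) ^ 2 := by
          apply pow_le_pow_left₀ (by positivity) h'
      _ = 4 * l2 * N := hr
  have h6 : 6 * Q ^ 2 ≤ 4 * l2 * N := by
    have hs2sq : (Real.sqrt 2) ^ 2 = 2 := Real.sq_sqrt (by norm_num)
    nlinarith [sq_nonneg Q, Real.sqrt_nonneg 2]
  have hQ2 : Q ^ 2 * (x + 3) < 2 * l2 * N * (x + 1) ^ 2 := by
    nlinarith [mul_pos (mul_pos hx hx) (pow_pos hQ 2), mul_pos hx (pow_pos hQ 2)]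
  -- abbreviations
  set W := x * (x + 2) * Q ^ 2 + 4 * N * (x + 1) ^ 2 * L * l2 with hWdef
  have hWpos : 0 < W := by
    rw [hWdef]; positivity
  set s := Real.sqrt (x * (x + 2)) with hsdef
  have hs2' : s ^ 2 = x * (x + 2) := Real.sq_sqrt (by positivity)
  have hspos : 0 < s := Real.sqrt_pos.2 (by positivity)
  have hsW : (Real.sqrt W) ^ 2 = W := Real.sq_sqrt hWpos.le
  have hsWpos : 0 < Real.sqrt W := Real.sqrt_pos.2 hWpos
  -- main squared inequality
  have hmain : ((x ^ 2 * (x + 2) - 2 * x * L) * Q) ^ 2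
      < (((x + 1) * L - x) * s * Real.sqrt W) ^ 2 := by
    have hexp : (((x + 1) * L - x) * s * Real.sqrt W) ^ 2
        = ((x + 1) * L - x) ^ 2 * (x * (x + 2)) * W := by
      rw [mul_pow, mul_pow, hs2', hsW]
    rw [hexp, hWdef]
    -- key polynomial inequality
    -- A² Q² < D² x(x+2) (x(x+2)Q² + 4N(x+1)² L l2)
    -- identity: A² = D² x²(x+2)² + x³ L (x+3) E
    have hstep : Q ^ 2 * (x ^ 3 * L * (x + 3) * (2 * x * (x + 2) - L * (x ^ 2 + 3 * x + 4)))
        < ((x + 1) * L - x) ^ 2 * (x * (x + 2)) * (4 * N * (x + 1) ^ 2 * L * l2) := by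
      -- multiply both sides by (x+2)² > 0 and chain
      have hx2 : (0 : ℝ) < x + 2 := by linarith
      rw [← mul_lt_mul_iff_of_pos_right (by positivity : (0 : ℝ) < (x + 2) ^ 2)]
      have c1 : Q ^ 2 * (x ^ 3 * L * (x + 3) * (2 * x * (x + 2) - L * (x ^ 2 + 3 * x + 4)))
            * (x + 2) ^ 2
          ≤ Q ^ 2 * x ^ 3 * L * (x + 3) * (2 * x ^ 2) * (x + 2) := by
        calc Q ^ 2 * (x ^ 3 * L * (x + 3) * (2 * x * (x + 2) - L * (x ^ 2 + 3 * x + 4)))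
              * (x + 2) ^ 2
            = (Q ^ 2 * x ^ 3 * L * (x + 3) * (x + 2))
              * ((2 * x * (x + 2) - L * (x ^ 2 + 3 * x + 4)) * (x + 2)) := by ring
          _ ≤ (Q ^ 2 * x ^ 3 * L * (x + 3) * (x + 2)) * (2 * x ^ 2) :=
              mul_le_mul_of_nonneg_left hE (by positivity)
          _ = Q ^ 2 * x ^ 3 * L * (x + 3) * (2 * x ^ 2) * (x + 2) := by ring
      have c2 : Q ^ 2 * x ^ 3 * L * (x + 3) * (2 * x ^ 2) * (x + 2)
          < 4 * l2 * N * (x + 1) ^ 2 * x ^ 5 * L * (x + 2) := by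
        calc Q ^ 2 * x ^ 3 * L * (x + 3) * (2 * x ^ 2) * (x + 2)
            = (2 * x ^ 5 * L * (x + 2)) * (Q ^ 2 * (x + 3)) := by ring
          _ < (2 * x ^ 5 * L * (x + 2)) * (2 * l2 * N * (x + 1) ^ 2) :=
              mul_lt_mul_of_pos_left hQ2 (by positivity)
          _ = 4 * l2 * N * (x + 1) ^ 2 * x ^ 5 * L * (x + 2) := by ring
      have c3 : 4 * l2 * N * (x + 1) ^ 2 * x ^ 5 * L * (x + 2)
          ≤ ((x + 1) * L - x) ^ 2 * (x * (x + 2)) * (4 * N * (x + 1) ^ 2 * L * l2)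
            * (x + 2) ^ 2 := by
        have hD2 : (x ^ 2) ^ 2 ≤ (((x + 1) * L - x) * (x + 2)) ^ 2 :=
          pow_le_pow_left₀ (by positivity) hD 2
        calc 4 * l2 * N * (x + 1) ^ 2 * x ^ 5 * L * (x + 2)
            = (4 * l2 * N * (x + 1) ^ 2 * x * L * (x + 2)) * ((x ^ 2) ^ 2) := by ring
          _ ≤ (4 * l2 * N * (x + 1) ^ 2 * x * L * (x + 2))
              * ((((x + 1) * L - x) * (x + 2)) ^ 2) :=
              mul_le_mul_of_nonneg_left hD2 (by positivity)
          _ = ((x + 1) * L - x) ^ 2 * (x * (x + 2)) * (4 * N * (x + 1) ^ 2 * L * l2)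
              * (x + 2) ^ 2 := by ring
      linarith
    calc ((x ^ 2 * (x + 2) - 2 * x * L) * Q) ^ 2
        = ((x + 1) * L - x) ^ 2 * x ^ 2 * (x + 2) ^ 2 * Q ^ 2
          + Q ^ 2 * (x ^ 3 * L * (x + 3) * (2 * x * (x + 2) - L * (x ^ 2 + 3 * x + 4))) := by
          ring
      _ < ((x + 1) * L - x) ^ 2 * x ^ 2 * (x + 2) ^ 2 * Q ^ 2
          + ((x + 1) * L - x) ^ 2 * (x * (x + 2)) * (4 * N * (x + 1) ^ 2 * L * l2) := by
          linarith
      _ = ((x + 1) * L - x) ^ 2 * (x * (x + 2))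
          * (x * (x + 2) * Q ^ 2 + 4 * N * (x + 1) ^ 2 * L * l2) := by ring
  have hlt : (x ^ 2 * (x + 2) - 2 * x * L) * Q
      < ((x + 1) * L - x) * s * Real.sqrt W := by
    have hrhs : 0 ≤ ((x + 1) * L - x) * s * Real.sqrt W := by positivity
    exact lt_of_pow_lt_pow_left₀ 2 hrhs hmain
  have hneg : (x - (x + 1) * L) * s * Real.sqrt W
      = -(((x + 1) * L - x) * s * Real.sqrt W) := by ring
  rw [hneg]
  linarith
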